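/- Let S⁴ and S⁷ be the unit spheres in 5-dimensional and 8-dimensional Euclidean space respectively, and let e : ℝ¹¹ → S⁴ × S⁷ be any open embedding of 11-dimensional Euclidean space into the product manifold S⁴ × S⁷. Then the complement (S⁴ × S⁷) ∖ e(B), where B is the open unit ball in ℝ¹¹, equipped with the subspace topology, is homotopy equivalent to the wedge S⁴ ∨ S⁷. -/

import Mathlib

set_option synthInstance.maxHeartbeats 1000000
set_option maxHeartbeats 1000000


/-- The setoid on `Y` identifying all the points of `S` with one another. -/
def collapseSetoid {Y : Type*} (S : Set Y) : Setoid Y where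
  r a b := a = b ∨ (a ∈ S ∧ b ∈ S)
  iseqv := by
    constructor
    · intro a; exact Or.inl rfl
    · rintro a b (rfl | ⟨h₁, h₂⟩)
      · exact Or.inl rfl
      · exact Or.inr ⟨h₂, h₁⟩
    · rintro a b c (rfl | ⟨h₁, h₂⟩) (rfl | ⟨h₃, h₄⟩)
      · exact Or.inl rfl
      · exact Or.inr ⟨h₃, h₄⟩
      · exact Or.inr ⟨h₁, h₂⟩
      · exact Or.inr ⟨h₁, h₄⟩

/-- The quotient space `Y/S` collapsing the subset `S` of `Y` to a single point,
equipped with the quotient topology. -/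
def Collapse (Y : Type*) [TopologicalSpace Y] (S : Set Y) : Type _ :=
  Quotient (collapseSetoid S)

instance (Y : Type*) [TopologicalSpace Y] (S : Set Y) : TopologicalSpace (Collapse Y S) :=
  instTopologicalSpaceQuotient

/-- The wedge `X ∨ Y` of two pointed spaces: the quotient of the disjoint union
identifying the two basepoints to a single point. -/
abbrev Wedge2 (X Y : Type*) [TopologicalSpace X] [TopologicalSpace Y]
    (x₀ : X) (y₀ : Y) : Type _ :=
  Collapse (X ⊕ Y) {Sum.inl x₀, Sum.inr y₀}


open Metric Set unitInterval Topology

noncomputable section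

open Metric Set

noncomputable section

/-- Homeomorphism of unit spheres induced by a linear isometry equivalence. -/
def sphereHomeoOfLI {E F : Type*} [NormedAddCommGroup E] [NormedAddCommGroup F]
    [NormedSpace ℝ E] [NormedSpace ℝ F] (φ : E ≃ₗᵢ[ℝ] F) :
    (sphere (0:E) 1 : Set E) ≃ₜ (sphere (0:F) 1 : Set F) where
  toFun x := ⟨φ x, by
    rw [mem_sphere_zero_iff_norm, φ.norm_map, ← mem_sphere_zero_iff_norm]
    exact x.2⟩
  invFun y := ⟨φ.symm y, by
    rw [mem_sphere_zero_iff_norm, φ.symm.norm_map, ← mem_sphere_zero_iff_norm]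
    exact y.2⟩
  left_inv x := Subtype.ext (φ.symm_apply_apply x)
  right_inv y := Subtype.ext (φ.apply_symm_apply y)
  continuous_toFun := by exact Continuous.subtype_mk (φ.continuous.comp continuous_subtype_val) _
  continuous_invFun := by exact Continuous.subtype_mk (φ.symm.continuous.comp continuous_subtype_val) _

@[simp] lemma sphereHomeoOfLI_apply_coe {E F : Type*} [NormedAddCommGroup E]
    [NormedAddCommGroup F] [NormedSpace ℝ E] [NormedSpace ℝ F] (φ : E ≃ₗᵢ[ℝ] F)
    (x : sphere (0:E) 1) : ((sphereHomeoOfLI φ) x : F) = φ x := rfl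

/-- Transitivity of the isometry group on the unit sphere. -/
lemma exists_li_map_unit {E : Type*} [NormedAddCommGroup E] [InnerProductSpace ℝ E]
    [FiniteDimensional ℝ E] {a b : E} (ha : ‖a‖ = 1) (hb : ‖b‖ = 1) :
    ∃ φ : E ≃ₗᵢ[ℝ] E, φ a = b := by
  have horth : ∀ c : E, ‖c‖ = 1 → ∃ B : OrthonormalBasis (Fin (Module.finrank ℝ E)) ℝ E,
      0 < Module.finrank ℝ E ∧ ∀ h : 0 < Module.finrank ℝ E, B ⟨0, h⟩ = c := by
    intro c hc
    have hpos : 0 < Module.finrank ℝ E := by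
      have : c ≠ 0 := by intro h; rw [h] at hc; simp at hc
      exact Module.finrank_pos_iff.mpr (nontrivial_of_ne c 0 this)
    set v : Fin (Module.finrank ℝ E) → E := fun _ => c with hv
    have hortho : Orthonormal ℝ (({⟨0, hpos⟩} : Set (Fin (Module.finrank ℝ E))).restrict v) := by
      constructor
      · intro i; exact hc
      · intro i j hij
        exact absurd (Subsingleton.elim i j) hij
    obtain ⟨B, hB⟩ := hortho.exists_orthonormalBasis_extension_of_card_eq (by simp)
    exact ⟨B, hpos, fun _ => hB _ rfl⟩
  obtain ⟨Ba, hpos, hBa⟩ := horth a ha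
  obtain ⟨Bb, -, hBb⟩ := horth b hb
  refine ⟨Ba.repr.trans Bb.repr.symm, ?_⟩
  have : Ba.repr a = EuclideanSpace.single ⟨0, hpos⟩ (1:ℝ) := by
    rw [← hBa hpos]; exact Ba.repr_self _
  rw [LinearIsometryEquiv.trans_apply, this, ← hBb hpos, ← Bb.repr_self ⟨0, hpos⟩,
    LinearIsometryEquiv.symm_apply_apply]

/-- A homeomorphism induces a homeomorphism of complements of singletons. -/
def Homeomorph.complSingleton {X Y : Type*} [TopologicalSpace X] [TopologicalSpace Y]
    (h : X ≃ₜ Y) (p : X) : ({p}ᶜ : Set X) ≃ₜ ({h p}ᶜ : Set Y) :=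
  (h.image _).trans (Homeomorph.setCongr (by
    rw [Set.image_compl_eq h.bijective, Set.image_singleton]))

section WedgeCongr


variable {X X' Y Y' : Type*} [TopologicalSpace X] [TopologicalSpace X']
  [TopologicalSpace Y] [TopologicalSpace Y']

private lemma wedge_rel_map (f : X ≃ₜ X') (g : Y ≃ₜ Y') {x₀ : X} {y₀ : Y} {x₀' : X'} {y₀' : Y'}
    (hf : f x₀ = x₀') (hg : g y₀ = y₀') :
    ∀ a b, (collapseSetoid ({Sum.inl x₀, Sum.inr y₀} : Set (X ⊕ Y))).r a b →
      (collapseSetoid ({Sum.inl x₀', Sum.inr y₀'} : Set (X' ⊕ Y'))).r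
      (Sum.map f g a) (Sum.map f g b) := by
  rintro a b (rfl | ⟨h₁, h₂⟩)
  · exact Or.inl rfl
  · refine Or.inr ⟨?_, ?_⟩
    · rcases h₁ with h | h <;> subst h <;> simp [hf, hg]
    · rcases h₂ with h | h <;> subst h <;> simp [hf, hg]

/-- Homeomorphisms matching basepoints induce a homeomorphism of wedges. -/
def wedgeCongr (f : X ≃ₜ X') (g : Y ≃ₜ Y') {x₀ : X} {y₀ : Y} {x₀' : X'} {y₀' : Y'}
    (hf : f x₀ = x₀') (hg : g y₀ = y₀') :
    Wedge2 X Y x₀ y₀ ≃ₜ Wedge2 X' Y' x₀' y₀' where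
  toFun := Quotient.map' (Sum.map f g) (wedge_rel_map f g hf hg)
  invFun := Quotient.map' (Sum.map f.symm g.symm)
    (wedge_rel_map f.symm g.symm (by simp [← hf]) (by simp [← hg]))
  left_inv := by
    refine Quotient.ind fun a => ?_
    rcases a with x | y <;> simp [Quotient.map'_mk''] <;> rfl
  right_inv := by
    refine Quotient.ind fun a => ?_
    rcases a with x | y <;> simp [Quotient.map'_mk''] <;> rfl
  continuous_toFun := by
    exact Continuous.quotient_map' (continuous_sumMap.mpr ⟨f.continuous, g.continuous⟩)
      (wedge_rel_map f g hf hg)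
  continuous_invFun := by
    exact Continuous.quotient_map' (continuous_sumMap.mpr ⟨f.symm.continuous, g.symm.continuous⟩)
      (wedge_rel_map f.symm g.symm (by simp [← hf]) (by simp [← hg]))

end WedgeCongr


noncomputable section
namespace ChartRetract

variable {V L : Type*} [NormedAddCommGroup V] [NormedSpace ℝ V] [ProperSpace V]
  [TopologicalSpace L] [T2Space L] (e : V → L) (he : Topology.IsOpenEmbedding e)

/-- The rescaling factor. -/
def scale (t : I) (x : V) : ℝ := 1 - (t:ℝ) + (t:ℝ) * min ‖x‖ 1

lemma scale_pos {x : V} (hx : x ≠ 0) (t : I) : 0 < scale t x := by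
  have hmin : 0 < min ‖x‖ 1 := lt_min (norm_pos_iff.mpr hx) one_pos
  rcases eq_or_lt_of_le t.2.2 with h | h
  · have heq : scale t x = min ‖x‖ 1 := by rw [scale, h]; ring
    rw [heq]; exact hmin
  · have h0 : (0:ℝ) ≤ (t:ℝ) := t.2.1
    have : 0 ≤ (t:ℝ) * min ‖x‖ 1 := mul_nonneg h0 hmin.le
    simp only [scale]; linarith

/-- The rescaled point. -/
def sigma (t : I) (x : V) : V := (scale t x)⁻¹ • x

lemma sigma_zero (x : V) : sigma 0 x = x := by simp [sigma, scale]

lemma sigma_of_one_le {x : V} (hx : 1 ≤ ‖x‖) (t : I) : sigma t x = x := by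
  have : min ‖x‖ 1 = 1 := min_eq_right hx
  simp [sigma, scale, this]

lemma sigma_ne_zero {x : V} (hx : x ≠ 0) (t : I) : sigma t x ≠ 0 :=
  smul_ne_zero (inv_ne_zero (scale_pos hx t).ne') hx

lemma one_le_norm_sigma_one {x : V} (hx : x ≠ 0) : 1 ≤ ‖sigma 1 x‖ := by
  have hmin : 0 < min ‖x‖ 1 := lt_min (norm_pos_iff.mpr hx) one_pos
  have hs : scale 1 x = min ‖x‖ 1 := by simp [scale]
  rw [sigma, hs, norm_smul, norm_inv, Real.norm_eq_abs, abs_of_pos hmin]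
  rw [inv_mul_eq_div, le_div_iff₀ hmin, one_mul]
  exact min_le_left _ _

variable [Nonempty V]

open scoped Classical in
/-- The ambient homotopy pushing the chart outwards. -/
def G (t : I) (y : L) : L :=
  if y ∈ range e then e (sigma t ((he.toOpenPartialHomeomorph e).symm y)) else y

lemma G_of_mem (t : I) {y : L} (hy : y ∈ range e) :
    G e he t y = e (sigma t ((he.toOpenPartialHomeomorph e).symm y)) := if_pos hy

lemma G_of_not_mem (t : I) {y : L} (hy : y ∉ range e) : G e he t y = y := if_neg hy

lemma G_apply_e (t : I) (x : V) : G e he t (e x) = e (sigma t x) := by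
  rw [G_of_mem e he t (mem_range_self x), he.toOpenPartialHomeomorph_left_inv]

lemma G_zero (y : L) : G e he 0 y = y := by
  by_cases hy : y ∈ range e
  · obtain ⟨x, rfl⟩ := hy
    rw [G_apply_e, sigma_zero]
  · exact G_of_not_mem e he 0 hy

lemma G_ne (t : I) {y : L} (hy : y ≠ e 0) : G e he t y ≠ e 0 := by
  by_cases hmem : y ∈ range e
  · obtain ⟨x, rfl⟩ := hmem
    have hx : x ≠ 0 := fun h => hy (by rw [h])
    rw [G_apply_e]
    exact fun h => sigma_ne_zero hx t (he.injective h)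
  · rwa [G_of_not_mem e he t hmem]

lemma G_one_mem_compl {y : L} (hy : y ≠ e 0) : G e he 1 y ∈ (e '' ball 0 1)ᶜ := by
  by_cases hmem : y ∈ range e
  · obtain ⟨x, rfl⟩ := hmem
    have hx : x ≠ 0 := fun h => hy (by rw [h])
    rw [G_apply_e]
    rintro ⟨z, hz, hez⟩
    have : z = sigma 1 x := he.injective hez
    rw [this] at hz
    exact absurd (mem_ball_zero_iff.mp hz) (not_lt.mpr (one_le_norm_sigma_one hx))
  · rw [G_of_not_mem e he 1 hmem]
    rintro ⟨z, _, hez⟩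
    exact hmem ⟨z, hez⟩

lemma G_one_of_mem_compl {y : L} (hy : y ∈ (e '' ball 0 1)ᶜ) : G e he 1 y = y := by
  by_cases hmem : y ∈ range e
  · obtain ⟨x, rfl⟩ := hmem
    have hx : 1 ≤ ‖x‖ := by
      by_contra h
      exact hy ⟨x, mem_ball_zero_iff.mpr (not_le.mp h), rfl⟩
    rw [G_apply_e, sigma_of_one_le hx]
  · exact G_of_not_mem e he 1 hmem

lemma continuousAt_G {t : I} {y : L} (hy : y ≠ e 0) :
    ContinuousAt (fun p : I × L => G e he p.1 p.2) (t, y) := by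
  set φ := he.toOpenPartialHomeomorph e with hφ
  by_cases hmem : y ∈ e '' ({0}ᶜ : Set V)
  · -- on the open set `e '' {0}ᶜ`, `G = e ∘ sigma ∘ φ.symm`
    have hU : IsOpen (e '' ({0}ᶜ : Set V)) := he.isOpenMap _ isOpen_compl_singleton
    have hUnhds : (univ : Set I) ×ˢ (e '' ({0}ᶜ : Set V)) ∈ 𝓝 ((t, y) : I × L) :=
      prod_mem_nhds Filter.univ_mem (hU.mem_nhds hmem)
    obtain ⟨x₀, hx₀ne, rfl⟩ := hmem
    have hx₀ : φ.symm (e x₀) = x₀ := he.toOpenPartialHomeomorph_left_inv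
    have hsymm_cont : ContinuousAt φ.symm (e x₀) := by
      apply φ.symm.continuousAt
      rw [OpenPartialHomeomorph.symm_source, he.toOpenPartialHomeomorph_target]
      exact mem_range_self x₀
    have hscale : ContinuousAt (fun p : I × V => scale p.1 p.2) (t, x₀) := by
      unfold scale
      fun_prop
    have hsigma : ContinuousAt (fun p : I × V => sigma p.1 p.2) (t, x₀) := by
      apply ContinuousAt.smul (hscale.inv₀ (scale_pos hx₀ne t).ne') continuousAt_snd
    have hg : ContinuousAt (fun p : I × L => e (sigma p.1 (φ.symm p.2))) (t, e x₀) := by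
      have hsnd : ContinuousAt (fun p : I × L => φ.symm p.2) (t, e x₀) := by
        exact ContinuousAt.comp (f := Prod.snd) (x := ((t, e x₀) : I × L)) hsymm_cont
          continuousAt_snd
      have h1 : ContinuousAt (fun p : I × L => ((p.1, φ.symm p.2) : I × V)) (t, e x₀) :=
        continuousAt_fst.prodMk hsnd
      have h2 : ContinuousAt (fun q : I × V => e (sigma q.1 q.2))
          ((fun p : I × L => ((p.1, φ.symm p.2) : I × V)) (t, e x₀)) := by
        show ContinuousAt _ (t, φ.symm (e x₀))
        rw [hx₀]
        exact he.continuous.continuousAt.comp hsigma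
      exact ContinuousAt.comp (f := fun p : I × L => ((p.1, φ.symm p.2) : I × V))
        (x := ((t, e x₀) : I × L)) h2 h1
    apply hg.congr
    filter_upwards [hUnhds] with p hp
    obtain ⟨z, hz, hez⟩ := hp.2
    have : p.2 ∈ range e := ⟨z, hez⟩
    rw [G_of_mem e he p.1 this]
  · -- `y` is outside the closed unit ball image; there `G = id`
    have hyrange : y ∉ range e := by
      intro ⟨x, hx⟩
      rcases eq_or_ne x 0 with rfl | hne
      · exact hy hx.symm
      · exact hmem ⟨x, hne, hx⟩
    have hclosed : IsClosed (e '' closedBall 0 1) :=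
      ((isCompact_closedBall 0 1).image he.continuous).isClosed
    have hU : IsOpen (e '' closedBall 0 1)ᶜ := hclosed.isOpen_compl
    have hymem : y ∈ (e '' closedBall 0 1)ᶜ := fun ⟨x, _, hx⟩ => hyrange ⟨x, hx⟩
    have hUnhds : (univ : Set I) ×ˢ (e '' closedBall 0 1)ᶜ ∈ 𝓝 ((t, y) : I × L) :=
      prod_mem_nhds Filter.univ_mem (hU.mem_nhds hymem)
    apply continuousAt_snd.congr
    filter_upwards [hUnhds] with p hp
    by_cases hpr : p.2 ∈ range e
    · rcases hpr with ⟨x, hx⟩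
      have hx1 : 1 ≤ ‖x‖ := by
        by_contra h
        exact hp.2 ⟨x, mem_closedBall_zero_iff.mpr (not_le.mp h).le, hx⟩
      rw [← hx, G_apply_e, sigma_of_one_le hx1]
    · rw [G_of_not_mem e he p.1 hpr]

/-- The deformation retraction of the complement of a point onto the complement of the image
of the unit ball, for an open embedding `e` of a normed space. -/
def chartHomotopyEquiv :
    ContinuousMap.HomotopyEquiv
      ((e '' ball 0 1)ᶜ : Set L) (({e 0}ᶜ : Set L)) := by
  classical
  have hsub : ((e '' ball 0 1)ᶜ : Set L) ⊆ ({e 0}ᶜ : Set L) := by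
    intro y hy hy0
    exact hy ⟨0, mem_ball_self one_pos, by rw [← hy0]⟩
  -- continuous version of G on the subtype
  have hGcont : ∀ s : Set L, (∀ y ∈ s, y ≠ e 0) →
      Continuous (fun p : I × s => G e he p.1 (p.2 : L)) := by
    intro s hs
    rw [continuous_iff_continuousAt]
    rintro ⟨t, y, hy⟩
    have hj : Continuous (fun p : I × s => ((p.1, (p.2 : L)) : I × L)) :=
      continuous_fst.prodMk (continuous_subtype_val.comp continuous_snd)
    exact ContinuousAt.comp (g := fun q : I × L => G e he q.1 q.2)
      (f := fun p : I × s => ((p.1, (p.2 : L)) : I × L))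
      (continuousAt_G e he (hs y hy)) hj.continuousAt
  refine
    { toFun := ⟨fun y => ⟨(y : L), hsub y.2⟩, by exact Continuous.subtype_mk continuous_subtype_val _⟩
      invFun := ⟨fun y => ⟨G e he 1 (y : L), G_one_mem_compl e he y.2⟩, ?_⟩
      left_inv := ?_
      right_inv := ?_ }
  · -- continuity of the retraction
    have := hGcont ({e 0}ᶜ : Set L) (fun y hy => hy)
    exact Continuous.subtype_mk
      (this.comp (Continuous.prodMk continuous_const continuous_id)) _
  · -- r ∘ i = id
    have h : (ContinuousMap.mk (fun y : (({e 0}ᶜ : Set L)) =>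
        (⟨G e he 1 (y : L), G_one_mem_compl e he y.2⟩ : ((e '' ball 0 1)ᶜ : Set L)))
        (by
          have := hGcont ({e 0}ᶜ : Set L) (fun y hy => hy)
          exact Continuous.subtype_mk
            (this.comp (Continuous.prodMk continuous_const continuous_id)) _)).comp
        (ContinuousMap.mk (fun y : ((e '' ball 0 1)ᶜ : Set L) => (⟨(y : L), hsub y.2⟩ : (({e 0}ᶜ : Set L))))
          (by exact Continuous.subtype_mk continuous_subtype_val _)) =
        ContinuousMap.id _ := by
      ext y
      exact congrArg Subtype.val (Subtype.ext (G_one_of_mem_compl e he y.2) :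
        (⟨G e he 1 (y : L), G_one_mem_compl e he (hsub y.2)⟩ : ((e '' ball 0 1)ᶜ : Set L)) = y)
    rw [h]
  · -- i ∘ r ≃ id via G
    refine ⟨⟨⟨fun p => ⟨G e he (unitInterval.symm p.1) (p.2 : L),
        G_ne e he _ p.2.2⟩, ?_⟩, ?_, ?_⟩⟩
    · apply Continuous.subtype_mk
      have := hGcont ({e 0}ᶜ : Set L) (fun y hy => hy)
      exact this.comp ((continuous_symm.comp continuous_fst).prodMk continuous_snd)
    · intro y
      apply Subtype.ext
      simp only [unitInterval.symm_zero]
      rfl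
    · intro y
      apply Subtype.ext
      simp only [unitInterval.symm_one]
      exact G_zero e he (y : L)

end ChartRetract


noncomputable section
namespace SpherePunct

variable {E : Type*} [NormedAddCommGroup E] [NormedSpace ℝ E]

/-- Convenient constructor for points of `WithLp 2 (E × ℝ)`. -/
def mk2 (a : E) (b : ℝ) : WithLp 2 (E × ℝ) := (WithLp.equiv 2 (E × ℝ)).symm (a, b)

lemma norm_mk2_sq (a : E) (b : ℝ) : ‖mk2 a b‖ ^ 2 = ‖a‖ ^ 2 + b ^ 2 := by
  rw [mk2, WithLp.prod_norm_sq_eq_of_L2]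
  norm_num [Real.norm_eq_abs, sq_abs]

lemma mk2_inj {a a' : E} {b b' : ℝ} : mk2 a b = mk2 a' b' ↔ a = a' ∧ b = b' := by
  rw [mk2, mk2, (WithLp.equiv 2 (E × ℝ)).symm.injective.eq_iff, Prod.mk.injEq]

lemma continuous_mk2 {X : Type*} [TopologicalSpace X] {f : X → E} {g : X → ℝ}
    (hf : Continuous f) (hg : Continuous g) : Continuous fun x => mk2 (f x) (g x) := by
  exact (WithLp.prodContinuousLinearEquiv 2 ℝ E ℝ).symm.continuous.comp (hf.prodMk hg)

/-- The quotient map collapsing the boundary of the unit disk, as a map to the sphere. -/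
def qmap (x : E) : WithLp 2 (E × ℝ) :=
  mk2 ((2 * Real.sqrt (1 - ‖x‖ ^ 2)) • x) (1 - 2 * ‖x‖ ^ 2)

lemma continuous_qmap : Continuous (qmap : E → WithLp 2 (E × ℝ)) := by
  apply continuous_mk2
  · exact (continuous_const.mul
      ((Real.continuous_sqrt).comp (continuous_const.sub (continuous_norm.pow 2)))).smul
      continuous_id
  · fun_prop

lemma norm_qmap {x : E} (hx : ‖x‖ ≤ 1) : ‖qmap x‖ = 1 := by
  have h0 : (0:ℝ) ≤ ‖x‖ := norm_nonneg x
  have h1 : (0:ℝ) ≤ 1 - ‖x‖ ^ 2 := by nlinarith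
  have hs : Real.sqrt (1 - ‖x‖ ^ 2) ^ 2 = 1 - ‖x‖ ^ 2 := Real.sq_sqrt h1
  have hsq : ‖qmap x‖ ^ 2 = 1 := by
    rw [qmap, norm_mk2_sq, norm_smul, Real.norm_eq_abs,
      abs_of_nonneg (by positivity : (0:ℝ) ≤ 2 * Real.sqrt (1 - ‖x‖ ^ 2))]
    nlinarith [hs]
  have hnn : (0:ℝ) ≤ ‖qmap x‖ := norm_nonneg _
  nlinarith [hsq, hnn]

lemma qmap_zero : qmap (0 : E) = mk2 0 1 := by
  rw [qmap, mk2_inj]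
  constructor
  · simp
  · simp

lemma qmap_of_norm_one {x : E} (hx : ‖x‖ = 1) : qmap x = mk2 0 (-1) := by
  rw [qmap, mk2_inj, hx]
  norm_num

lemma norm_eq_of_qmap_eq {x x' : E} (h : qmap x = qmap x') : ‖x‖ = ‖x'‖ := by
  rw [qmap, qmap, mk2_inj] at h
  have h2 := h.2
  have : ‖x‖ ^ 2 = ‖x'‖ ^ 2 := by linarith
  have hfac : (‖x‖ - ‖x'‖) * (‖x‖ + ‖x'‖) = 0 := by nlinarith
  rcases mul_eq_zero.mp hfac with h | h
  · linarith
  · have := norm_nonneg x; have := norm_nonneg x'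
    have hx0 : ‖x‖ = 0 := by linarith
    have hx'0 : ‖x'‖ = 0 := by linarith
    rw [hx0, hx'0]

lemma qmap_eq_iff {x x' : E} (hx : ‖x‖ ≤ 1) (hx' : ‖x'‖ ≤ 1) :
    qmap x = qmap x' ↔ x = x' ∨ (‖x‖ = 1 ∧ ‖x'‖ = 1) := by
  constructor
  · intro h
    have hnorm := norm_eq_of_qmap_eq h
    rcases eq_or_lt_of_le hx with h1 | h1
    · exact Or.inr ⟨h1, by rw [← hnorm, h1]⟩
    · left
      rw [qmap, qmap, mk2_inj] at h
      have hc : (0:ℝ) < 2 * Real.sqrt (1 - ‖x‖ ^ 2) := by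
        have : (0:ℝ) < 1 - ‖x‖ ^ 2 := by nlinarith [norm_nonneg x]
        positivity
      have h1' := h.1
      rw [← hnorm] at h1'
      exact smul_right_injective E hc.ne' h1'
  · rintro (rfl | ⟨h1, h2⟩)
    · rfl
    · rw [qmap_of_norm_one h1, qmap_of_norm_one h2]

lemma qmap_eq_north_iff {x : E} (hx : ‖x‖ ≤ 1) : qmap x = mk2 0 1 ↔ x = 0 := by
  rw [← qmap_zero]
  rw [qmap_eq_iff hx (by simp)]
  constructor
  · rintro (rfl | ⟨-, h⟩)
    · rfl
    · simp at h
  · rintro rfl; left; rfl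

lemma norm_eq_one_of_qmap_eq_south {x : E} (hx : ‖x‖ ≤ 1) (h : qmap x = mk2 0 (-1)) :
    ‖x‖ = 1 := by
  rw [qmap, mk2_inj] at h
  have := h.2
  nlinarith [norm_nonneg x]

lemma qmap_surj {u : E} (hu : ‖u‖ = 1) (z : WithLp 2 (E × ℝ)) (hz : ‖z‖ = 1) :
    ∃ x : E, ‖x‖ ≤ 1 ∧ qmap x = z := by
  set v : E := (WithLp.equiv 2 (E × ℝ) z).1 with hv
  set c : ℝ := (WithLp.equiv 2 (E × ℝ) z).2 with hc
  have hzmk : z = mk2 v c := by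
    rw [mk2, hv, hc]
    exact ((WithLp.equiv 2 (E × ℝ)).symm_apply_apply z).symm
  have hnorm : ‖v‖ ^ 2 + c ^ 2 = 1 := by
    rw [← norm_mk2_sq, ← hzmk, hz]; norm_num
  have hc1 : -1 ≤ c := by nlinarith [norm_nonneg v]
  rcases eq_or_lt_of_le hc1 with hceq | hclt
  · -- south pole
    refine ⟨u, hu.le, ?_⟩
    have hv0 : v = 0 := by
      have : ‖v‖ ^ 2 = 0 := by nlinarith
      have := pow_eq_zero_iff (n := 2) (by norm_num) |>.mp this
      exact norm_eq_zero.mp this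
    rw [qmap_of_norm_one hu, hzmk, hv0, ← hceq]
  · -- interior / upper part
    set s : ℝ := Real.sqrt (2 * (1 + c)) with hs
    have hspos : 0 < s := Real.sqrt_pos.mpr (by linarith)
    have hssq : s ^ 2 = 2 * (1 + c) := Real.sq_sqrt (by linarith)
    refine ⟨s⁻¹ • v, ?_, ?_⟩
    · have hxnorm : ‖s⁻¹ • v‖ ^ 2 = (1 - c) / 2 := by
        rw [norm_smul, Real.norm_eq_abs, abs_of_pos (inv_pos.mpr hspos), mul_pow]
        rw [inv_pow, hssq]
        have : ‖v‖ ^ 2 = 1 - c ^ 2 := by linarith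
        rw [this]
        have hinv : ((2:ℝ) + c * 2) * ((2:ℝ) * (1 + c))⁻¹ = 1 := by
          rw [show (2:ℝ) + c * 2 = 2 * (1 + c) by ring]
          exact mul_inv_cancel₀ (by nlinarith)
        field_simp
        rw [div_eq_iff (by linarith)]; ring
      have hle : ‖s⁻¹ • v‖ ^ 2 ≤ 1 := by rw [hxnorm]; linarith
      nlinarith [norm_nonneg (s⁻¹ • v)]
    · have hxnorm : ‖s⁻¹ • v‖ ^ 2 = (1 - c) / 2 := by
        rw [norm_smul, Real.norm_eq_abs, abs_of_pos (inv_pos.mpr hspos), mul_pow]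
        rw [inv_pow, hssq]
        have : ‖v‖ ^ 2 = 1 - c ^ 2 := by linarith
        rw [this]
        have hinv : ((2:ℝ) + c * 2) * ((2:ℝ) * (1 + c))⁻¹ = 1 := by
          rw [show (2:ℝ) + c * 2 = 2 * (1 + c) by ring]
          exact mul_inv_cancel₀ (by nlinarith)
        field_simp
        rw [div_eq_iff (by linarith)]; ring
      rw [qmap, hxnorm, hzmk, mk2_inj]
      constructor
      · have hcoef : 2 * Real.sqrt (1 - (1 - c) / 2) = s := by
          have h14 : 1 - (1 - c) / 2 = (1 + c) / 2 := by ring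
          rw [h14, hs]
          rw [show (2:ℝ) * (1 + c) = 2 ^ 2 * ((1 + c) / 2) by ring]
          rw [Real.sqrt_mul (by norm_num : (0:ℝ) ≤ (2:ℝ) ^ 2)]
          rw [Real.sqrt_sq (by norm_num : (0:ℝ) ≤ (2:ℝ))]
        rw [hcoef, smul_smul, mul_inv_cancel₀ hspos.ne', one_smul]
      · ring

section Punctured

variable (G : Type*) [NormedAddCommGroup G] [NormedSpace ℝ G] [FiniteDimensional ℝ G]

/-- The model sphere: unit sphere of `WithLp 2 (G × ℝ)`. -/
def SpS : Set (WithLp 2 (G × ℝ)) := sphere 0 1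

lemma norm_eq_one_of_sq' {α : Type*} [NormedAddCommGroup α] {z : α} (h : ‖z‖ ^ 2 = 1) :
    ‖z‖ = 1 := by nlinarith [norm_nonneg z]

/-- North pole. -/
def north : ↥(SpS G) :=
  ⟨mk2 0 1, by
    rw [SpS, mem_sphere_zero_iff_norm]
    apply norm_eq_one_of_sq'
    rw [norm_mk2_sq]; simp⟩

/-- South pole. -/
def south : ↥(SpS G) :=
  ⟨mk2 0 (-1), by
    rw [SpS, mem_sphere_zero_iff_norm]
    apply norm_eq_one_of_sq'
    rw [norm_mk2_sq]; simp⟩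

lemma south_ne_north : south G ≠ north G := by
  intro h
  rw [south, north, Subtype.mk.injEq, mk2_inj] at h
  have := h.2
  norm_num at this

/-- The closed unit disk. -/
def Disk : Set G := closedBall 0 1

instance : CompactSpace ↥(Disk G) :=
  isCompact_iff_compactSpace.mp (isCompact_closedBall 0 1)

instance : CompactSpace ↥(SpS G) :=
  isCompact_iff_compactSpace.mp (isCompact_sphere 0 1)

variable {G}

/-- The collapse map from the disk to the sphere. -/
def qS (x : ↥(Disk G)) : ↥(SpS G) :=
  ⟨qmap (x : G), by
    rw [SpS, mem_sphere_zero_iff_norm]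
    exact norm_qmap (mem_closedBall_zero_iff.mp x.2)⟩

lemma continuous_qS : Continuous (qS : ↥(Disk G) → ↥(SpS G)) := by
  exact Continuous.subtype_mk (continuous_qmap.comp continuous_subtype_val) _

lemma norm_le_one (x : ↥(Disk G)) : ‖(x : G)‖ ≤ 1 := mem_closedBall_zero_iff.mp x.2

lemma qS_surjective {u : G} (hu : ‖u‖ = 1) : Function.Surjective (qS : ↥(Disk G) → ↥(SpS G)) := by
  rintro ⟨z, hz⟩
  obtain ⟨x, hx, hqx⟩ := qmap_surj hu z (by rwa [SpS, mem_sphere_zero_iff_norm] at hz)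
  exact ⟨⟨x, mem_closedBall_zero_iff.mpr hx⟩, Subtype.ext hqx⟩

lemma qS_eq_iff {x y : ↥(Disk G)} :
    qS x = qS y ↔ x = y ∨ (‖(x : G)‖ = 1 ∧ ‖(y : G)‖ = 1) := by
  rw [Subtype.ext_iff, qS, qS]
  simp only
  rw [qmap_eq_iff (norm_le_one x) (norm_le_one y)]
  constructor
  · rintro (h | h)
    · exact Or.inl (Subtype.ext h)
    · exact Or.inr h
  · rintro (rfl | h)
    · exact Or.inl rfl
    · exact Or.inr h

lemma qS_eq_north_iff {x : ↥(Disk G)} : qS x = north G ↔ (x : G) = 0 := by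
  rw [Subtype.ext_iff, qS, north]
  exact qmap_eq_north_iff (norm_le_one x)

lemma qS_eq_south_iff {x : ↥(Disk G)} : qS x = south G ↔ ‖(x : G)‖ = 1 := by
  rw [Subtype.ext_iff, qS, south]
  constructor
  · exact fun h => norm_eq_one_of_qmap_eq_south (norm_le_one x) h
  · exact fun h => qmap_of_norm_one h

end Punctured
section TwoSpheres

variable (E F : Type*) [NormedAddCommGroup E] [NormedSpace ℝ E] [FiniteDimensional ℝ E]
  [NormedAddCommGroup F] [NormedSpace ℝ F] [FiniteDimensional ℝ F]

/-- The product of the two model spheres. -/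
abbrev LSp := ↥(SpS E) × ↥(SpS F)

/-- The punctured product. -/
def PSet : Set (LSp E F) := {(north E, north F)}ᶜ

/-- The wedge, as a subspace of the product. -/
def WSet : Set (LSp E F) := {w | w.1 = south E ∨ w.2 = south F}

/-- The collapse map on products of disks. -/
def Qf (z : ↥(Disk E) × ↥(Disk F)) : LSp E F := (qS z.1, qS z.2)

variable {E F}

lemma continuous_Qf : Continuous (Qf E F) :=
  (continuous_qS.comp continuous_fst).prodMk (continuous_qS.comp continuous_snd)

lemma Qf_eq_poles_iff {z : ↥(Disk E) × ↥(Disk F)} :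
    Qf E F z = (north E, north F) ↔ ((z.1 : E) = 0 ∧ (z.2 : F) = 0) := by
  rw [Qf, Prod.mk.injEq, qS_eq_north_iff, qS_eq_north_iff]

lemma WSet_subset_PSet : WSet E F ⊆ PSet E F := by
  rintro w (h | h) hmem
  · rw [mem_singleton_iff] at hmem
    exact south_ne_north E (by rw [← h, hmem])
  · rw [mem_singleton_iff] at hmem
    exact south_ne_north F (by rw [← h, hmem])

/-- The set upstairs: preimage of the punctured product. -/
def USet : Set (↥(Disk E) × ↥(Disk F)) := Qf E F ⁻¹' (PSet E F)

lemma mem_USet_iff {z : ↥(Disk E) × ↥(Disk F)} :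
    z ∈ USet ↔ ¬((z.1 : E) = 0 ∧ (z.2 : F) = 0) := by
  rw [USet, mem_preimage, PSet, mem_compl_iff, mem_singleton_iff, Qf_eq_poles_iff]

/-- The restricted collapse map, a quotient map onto the punctured product. -/
def Q' : ↥(USet (E := E) (F := F)) → ↥(PSet E F) := (PSet E F).restrictPreimage (Qf E F)

lemma isQuotientMap_Qf {u : E} {v : F} (hu : ‖u‖ = 1) (hv : ‖v‖ = 1) :
    Topology.IsQuotientMap (Qf E F) := by
  have hsurj : Function.Surjective (Qf E F) := by
    rintro ⟨a, b⟩
    obtain ⟨x, hx⟩ := qS_surjective hu a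
    obtain ⟨y, hy⟩ := qS_surjective hv b
    exact ⟨(x, y), by rw [Qf, hx, hy]⟩
  exact (continuous_Qf.isClosedMap).isQuotientMap continuous_Qf hsurj

lemma isQuotientMap_Q' {u : E} {v : F} (hu : ‖u‖ = 1) (hv : ‖v‖ = 1) :
    Topology.IsQuotientMap (Q' (E := E) (F := F)) :=
  (isQuotientMap_Qf hu hv).restrictPreimage_isOpen
    (isOpen_compl_singleton)

/-- Max of coordinate norms. -/
def dd (z : ↥(Disk E) × ↥(Disk F)) : ℝ := max ‖(z.1 : E)‖ ‖(z.2 : F)‖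

lemma dd_le_one (z : ↥(Disk E) × ↥(Disk F)) : dd z ≤ 1 :=
  max_le (norm_le_one z.1) (norm_le_one z.2)

lemma dd_nonneg (z : ↥(Disk E) × ↥(Disk F)) : 0 ≤ dd z :=
  le_trans (norm_nonneg _) (le_max_left _ _)

lemma dd_pos {z : ↥(Disk E) × ↥(Disk F)} (hz : z ∈ USet) : 0 < dd z := by
  rw [mem_USet_iff] at hz
  rcases not_and_or.mp hz with h | h
  · exact lt_of_lt_of_le (norm_pos_iff.mpr h) (le_max_left _ _)
  · exact lt_of_lt_of_le (norm_pos_iff.mpr h) (le_max_right _ _)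

/-- Scaling denominator. -/
def dl (t : I) (z : ↥(Disk E) × ↥(Disk F)) : ℝ := 1 - (t : ℝ) + (t : ℝ) * dd z

lemma dl_pos {z : ↥(Disk E) × ↥(Disk F)} (hz : z ∈ USet) (t : I) : 0 < dl t z := by
  have h := dd_pos hz
  rcases eq_or_lt_of_le t.2.2 with h1 | h1
  · have : dl t z = dd z := by rw [dl, h1]; ring
    rw [this]; exact h
  · have h0 : (0:ℝ) ≤ (t : ℝ) := t.2.1
    have : 0 ≤ (t : ℝ) * dd z := mul_nonneg h0 h.le
    rw [dl]; linarith

lemma dl_le_one (t : I) (z : ↥(Disk E) × ↥(Disk F)) : dl t z ≤ 1 := by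
  have h0 : (0:ℝ) ≤ (t : ℝ) := t.2.1
  have h1 : (t : ℝ) ≤ 1 := t.2.2
  have := dd_le_one z
  have : (t : ℝ) * dd z ≤ (t : ℝ) := by nlinarith [dd_nonneg z]
  rw [dl]; linarith

lemma norm_le_dl {α : Type*} [NormedAddCommGroup α] (t : I) (z : ↥(Disk E) × ↥(Disk F))
    (x : α) (hx1 : ‖x‖ ≤ 1) (hxd : ‖x‖ ≤ dd z) : ‖x‖ ≤ dl t z := by
  have h0 : (0:ℝ) ≤ (t : ℝ) := t.2.1
  have h1 : (t : ℝ) ≤ 1 := t.2.2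
  have hn : (0:ℝ) ≤ ‖x‖ := norm_nonneg x
  rw [dl]
  nlinarith

lemma norm_smul_dl_le {α : Type*} [NormedAddCommGroup α] [NormedSpace ℝ α]
    (t : I) (z : ↥(Disk E) × ↥(Disk F)) (x : α) (hx1 : ‖x‖ ≤ 1) (hxd : ‖x‖ ≤ dd z) :
    ‖(dl t z)⁻¹ • x‖ ≤ 1 := by
  rcases eq_or_ne x 0 with rfl | hx0
  · simp
  · have hdd : 0 < dd z := lt_of_lt_of_le (norm_pos_iff.mpr hx0) hxd
    have hdl : 0 < dl t z := by
      have h0 : (0:ℝ) ≤ (t : ℝ) := t.2.1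
      rcases eq_or_lt_of_le t.2.2 with h1 | h1
      · have : dl t z = dd z := by rw [dl, h1]; ring
        rw [this]; exact hdd
      · have : 0 ≤ (t : ℝ) * dd z := mul_nonneg h0 hdd.le
        rw [dl]; linarith
    rw [norm_smul, Real.norm_eq_abs, abs_of_pos (inv_pos.mpr hdl)]
    rw [inv_mul_le_iff₀ hdl, mul_one]
    exact norm_le_dl t z x hx1 hxd

/-- The rescaled point upstairs. -/
def sc (t : I) (z : ↥(Disk E) × ↥(Disk F)) : ↥(Disk E) × ↥(Disk F) :=
  (⟨(dl t z)⁻¹ • (z.1 : E), mem_closedBall_zero_iff.mpr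
      (norm_smul_dl_le t z _ (norm_le_one z.1) (le_max_left _ _))⟩,
   ⟨(dl t z)⁻¹ • (z.2 : F), mem_closedBall_zero_iff.mpr
      (norm_smul_dl_le t z _ (norm_le_one z.2) (le_max_right _ _))⟩)

lemma sc_of_dl_one {t : I} {z : ↥(Disk E) × ↥(Disk F)} (h : dl t z = 1) : sc t z = z := by
  refine Prod.ext (Subtype.ext ?_) (Subtype.ext ?_)
  · show (dl t z)⁻¹ • ((z.1 : E)) = _
    rw [h]; simp
  · show (dl t z)⁻¹ • ((z.2 : F)) = _
    rw [h]; simp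

lemma sc_zero (z : ↥(Disk E) × ↥(Disk F)) : sc 0 z = z :=
  sc_of_dl_one (by rw [dl]; norm_num)

lemma dl_one_of_dd_one {t : I} {z : ↥(Disk E) × ↥(Disk F)} (h : dd z = 1) : dl t z = 1 := by
  rw [dl, h]; ring

lemma sc_mem_USet {z : ↥(Disk E) × ↥(Disk F)} (hz : z ∈ USet) (t : I) : sc t z ∈ USet := by
  have hdl : 0 < dl t z := dl_pos hz t
  rw [mem_USet_iff] at hz ⊢
  rcases not_and_or.mp hz with h | h
  · exact not_and_or.mpr (Or.inl (smul_ne_zero (inv_ne_zero hdl.ne') h))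
  · exact not_and_or.mpr (Or.inr (smul_ne_zero (inv_ne_zero hdl.ne') h))

lemma dd_sc_one {z : ↥(Disk E) × ↥(Disk F)} (hz : z ∈ USet) : dd (sc 1 z) = 1 := by
  have hdd : 0 < dd z := dd_pos hz
  have hdl : dl 1 z = dd z := by rw [dl]; norm_num
  show max ‖(dl 1 z)⁻¹ • ((z.1 : E))‖ ‖(dl 1 z)⁻¹ • ((z.2 : F))‖ = 1
  rw [norm_smul, norm_smul, Real.norm_eq_abs, hdl, abs_of_pos (inv_pos.mpr hdd),
    ← mul_max_of_nonneg _ _ (inv_pos.mpr hdd).le, ← dd, inv_mul_cancel₀ hdd.ne']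

/-- A scaled point lands in the wedge at time `1`. -/
lemma Qf_sc_one_mem_WSet {z : ↥(Disk E) × ↥(Disk F)} (hz : z ∈ USet) :
    Qf E F (sc 1 z) ∈ WSet E F := by
  have h := dd_sc_one hz
  rw [dd] at h
  rcases max_cases ‖((sc 1 z).1 : E)‖ ‖((sc 1 z).2 : F)‖ with ⟨heq, -⟩ | ⟨heq, -⟩
  · rw [heq] at h
    exact Or.inl (qS_eq_south_iff.mpr h)
  · rw [heq] at h
    exact Or.inr (qS_eq_south_iff.mpr h)

lemma norms_eq_of_Qf_eq {z z' : ↥(Disk E) × ↥(Disk F)} (h : Qf E F z = Qf E F z') :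
    ‖(z.1 : E)‖ = ‖(z'.1 : E)‖ ∧ ‖(z.2 : F)‖ = ‖(z'.2 : F)‖ := by
  rw [Qf, Prod.mk.injEq] at h
  constructor
  · exact norm_eq_of_qmap_eq (congrArg Subtype.val h.1)
  · exact norm_eq_of_qmap_eq (congrArg Subtype.val h.2)

/-- The key descent property: the homotopy respects the fibers of `Qf`. -/
lemma Qf_sc_descent {z z' : ↥(Disk E) × ↥(Disk F)} (hz : z ∈ USet)
    (h : Qf E F z = Qf E F z') (t : I) : Qf E F (sc t z) = Qf E F (sc t z') := by
  obtain ⟨h1, h2⟩ := norms_eq_of_Qf_eq h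
  have hdd : dd z = dd z' := by rw [dd, dd, h1, h2]
  rcases eq_or_lt_of_le (dd_le_one z) with hone | hlt
  · -- some coordinate has norm one: the scaling is trivial
    rw [sc_of_dl_one (dl_one_of_dd_one hone), sc_of_dl_one (dl_one_of_dd_one (hdd ▸ hone))]
    exact h
  · -- all coordinates have norm `< 1`: the fibers are single points
    have hq1 : qS z.1 = qS z'.1 := congrArg Prod.fst h
    have hq2 : qS z.2 = qS z'.2 := congrArg Prod.snd h
    have hx : z.1 = z'.1 := by
      rcases qS_eq_iff.mp hq1 with h' | ⟨h', -⟩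
      · exact h'
      · exact absurd (lt_of_le_of_lt (le_max_left _ _) hlt) (by rw [h']; simp)
    have hy : z.2 = z'.2 := by
      rcases qS_eq_iff.mp hq2 with h' | ⟨h', -⟩
      · exact h'
      · exact absurd (lt_of_le_of_lt (le_max_right _ _) hlt) (by rw [h']; simp)
    rw [show z = z' from Prod.ext hx hy]

end TwoSpheres
section Main

variable {E F : Type*} [NormedAddCommGroup E] [NormedSpace ℝ E] [FiniteDimensional ℝ E]
  [NormedAddCommGroup F] [NormedSpace ℝ F] [FiniteDimensional ℝ F]

/-- The homotopy upstairs, as a bundled continuous map. -/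
def HQ : C(↥(USet (E := E) (F := F)) × I, ↥(PSet E F)) where
  toFun p := ⟨Qf E F (sc p.2 (p.1 : ↥(Disk E) × ↥(Disk F))), sc_mem_USet p.1.2 p.2⟩
  continuous_toFun := by
    have hz1 : Continuous fun p : ↥(USet (E := E) (F := F)) × I => ((p.1 : ↥(Disk E) × ↥(Disk F)).1 : E) :=
      continuous_subtype_val.comp (continuous_fst.comp
        (continuous_subtype_val.comp continuous_fst))
    have hz2 : Continuous fun p : ↥(USet (E := E) (F := F)) × I => ((p.1 : ↥(Disk E) × ↥(Disk F)).2 : F) :=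
      continuous_subtype_val.comp (continuous_snd.comp
        (continuous_subtype_val.comp continuous_fst))
    have ht : Continuous fun p : ↥(USet (E := E) (F := F)) × I => (p.2 : ℝ) :=
      continuous_subtype_val.comp continuous_snd
    have hdd : Continuous fun p : ↥(USet (E := E) (F := F)) × I =>
        dd (p.1 : ↥(Disk E) × ↥(Disk F)) := hz1.norm.max hz2.norm
    have hdl : Continuous fun p : ↥(USet (E := E) (F := F)) × I =>
        dl p.2 (p.1 : ↥(Disk E) × ↥(Disk F)) :=
      (continuous_const.sub ht).add (ht.mul hdd)
    have hdlinv : Continuous fun p : ↥(USet (E := E) (F := F)) × I =>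
        (dl p.2 (p.1 : ↥(Disk E) × ↥(Disk F)))⁻¹ :=
      hdl.inv₀ fun p => (dl_pos p.1.2 p.2).ne'
    have hsc : Continuous fun p : ↥(USet (E := E) (F := F)) × I =>
        sc p.2 (p.1 : ↥(Disk E) × ↥(Disk F)) := by
      apply Continuous.prodMk
      · exact Continuous.subtype_mk (hdlinv.smul hz1) _
      · exact Continuous.subtype_mk (hdlinv.smul hz2) _
    exact Continuous.subtype_mk (continuous_Qf.comp hsc) _

/-- The deformation retraction of the punctured product of spheres onto the wedge. -/
def puncturedHomotopyEquiv {u : E} {v : F} (hu : ‖u‖ = 1) (hv : ‖v‖ = 1) :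
    ContinuousMap.HomotopyEquiv ↥(PSet E F) ↥(WSet E F) := by
  classical
  set curryHQ : C(↥(USet (E := E) (F := F)), C(I, ↥(PSet E F))) :=
    ContinuousMap.curry (HQ (E := E) (F := F)) with hcurry
  have hQval : ∀ z : ↥(USet (E := E) (F := F)), ((Q' z : ↥(PSet E F)) : LSp E F)
      = Qf E F (z : ↥(Disk E) × ↥(Disk F)) := fun z => rfl
  set sig : ↥(PSet E F) → ↥(USet (E := E) (F := F)) :=
    fun p => Function.surjInv (isQuotientMap_Q' hu hv).surjective p with hsigdef
  have hsig : ∀ p, Q' (sig p) = p := fun p =>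
    Function.surjInv_eq (isQuotientMap_Q' hu hv).surjective p
  have hdesc : ∀ z z' : ↥(USet (E := E) (F := F)), Q' z = Q' z' → curryHQ z = curryHQ z' := by
    intro z z' h
    refine ContinuousMap.ext fun t => Subtype.ext ?_
    show Qf E F (sc t (z : ↥(Disk E) × ↥(Disk F))) = Qf E F (sc t (z' : ↥(Disk E) × ↥(Disk F)))
    have hvals : Qf E F (z : ↥(Disk E) × ↥(Disk F)) = Qf E F (z' : ↥(Disk E) × ↥(Disk F)) := by
      rw [← hQval z, ← hQval z', h]
    exact Qf_sc_descent z.2 hvals t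
  set Hd : ↥(PSet E F) → C(I, ↥(PSet E F)) := fun p => curryHQ (sig p) with hHddef
  have hHd : Continuous Hd := by
    rw [(isQuotientMap_Q' hu hv).continuous_iff]
    have heq : Hd ∘ Q' = fun z => curryHQ z := by
      funext z
      exact hdesc _ _ (hsig (Q' z))
    rw [heq]
    exact curryHQ.continuous
  have hHdval : ∀ p t, ((Hd p t : ↥(PSet E F)) : LSp E F)
      = Qf E F (sc t ((sig p) : ↥(Disk E) × ↥(Disk F))) := fun p t => rfl
  have hd0 : ∀ p, Hd p 0 = p := by
    intro p
    apply Subtype.ext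
    rw [hHdval, sc_zero, ← hQval (sig p), hsig p]
  have hWmem : ∀ p, ((Hd p 1 : ↥(PSet E F)) : LSp E F) ∈ WSet E F := by
    intro p
    rw [hHdval]
    exact Qf_sc_one_mem_WSet (sig p).2
  set rC : C(↥(PSet E F), ↥(WSet E F)) :=
    ⟨fun p => ⟨((Hd p 1 : ↥(PSet E F)) : LSp E F), hWmem p⟩, by
      apply Continuous.subtype_mk
      exact continuous_subtype_val.comp ((continuous_eval_const 1).comp hHd)⟩
    with hrC
  set iC : C(↥(WSet E F), ↥(PSet E F)) :=
    ⟨fun w => ⟨(w : LSp E F), WSet_subset_PSet w.2⟩, by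
      exact Continuous.subtype_mk continuous_subtype_val _⟩ with hiC
  refine { toFun := rC, invFun := iC, left_inv := ?_, right_inv := ?_ }
  · -- iC ∘ rC homotopic to the identity
    refine ⟨ContinuousMap.Homotopy.symm ⟨⟨fun q => Hd q.2 q.1, ?_⟩, ?_, ?_⟩⟩
    · exact continuous_eval.comp
        ((hHd.comp continuous_snd).prodMk continuous_fst)
    · intro p
      exact hd0 p
    · intro p
      exact Subtype.ext rfl
  · -- rC ∘ iC is the identity
    have h : rC.comp iC = ContinuousMap.id _ := by
      refine ContinuousMap.ext fun w => Subtype.ext ?_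
      show ((Hd (iC w) 1 : ↥(PSet E F)) : LSp E F) = (w : LSp E F)
      set z : ↥(USet (E := E) (F := F)) := sig (iC w) with hz
      have hvalz : Qf E F (z : ↥(Disk E) × ↥(Disk F)) = (w : LSp E F) := by
        rw [← hQval z, hz, hsig (iC w)]
        rfl
      have hddz : dd (z : ↥(Disk E) × ↥(Disk F)) = 1 := by
        rcases w.2 with hS | hS
        · have hq1 : qS ((z : ↥(Disk E) × ↥(Disk F)).1) = south E := by
            rw [show qS ((z : ↥(Disk E) × ↥(Disk F)).1) = (Qf E F (z : _)).1 from rfl, hvalz, hS]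
          have hn : ‖(((z : ↥(Disk E) × ↥(Disk F)).1) : E)‖ = 1 := qS_eq_south_iff.mp hq1
          exact le_antisymm (dd_le_one _) (by rw [dd, ← hn]; exact le_max_left _ _)
        · have hq2 : qS ((z : ↥(Disk E) × ↥(Disk F)).2) = south F := by
            rw [show qS ((z : ↥(Disk E) × ↥(Disk F)).2) = (Qf E F (z : _)).2 from rfl, hvalz, hS]
          have hn : ‖(((z : ↥(Disk E) × ↥(Disk F)).2) : F)‖ = 1 := qS_eq_south_iff.mp hq2
          exact le_antisymm (dd_le_one _) (by rw [dd, ← hn]; exact le_max_right _ _)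
      rw [hHdval, sc_of_dl_one (dl_one_of_dd_one hddz), hvalz]
    rw [h]
    try exact ContinuousMap.Homotopic.refl _

/-- The wedge as a quotient is homeomorphic to the wedge as a subspace. -/
def wedgeToWSet : Wedge2 (↥(SpS E)) (↥(SpS F)) (south E) (south F) ≃ₜ ↥(WSet E F) := by
  classical
  let f : (↥(SpS E) ⊕ ↥(SpS F)) → ↥(WSet E F) :=
    Sum.elim (fun a => ⟨(a, south F), Or.inr rfl⟩) (fun b => ⟨(south E, b), Or.inl rfl⟩)
  have hresp : ∀ a b, (collapseSetoid
      ({Sum.inl (south E), Sum.inr (south F)} : Set (↥(SpS E) ⊕ ↥(SpS F)))).r a b →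
      f a = f b := by
    rintro a b (rfl | ⟨ha, hb⟩)
    · rfl
    · have hval : ∀ c, c ∈ ({Sum.inl (south E), Sum.inr (south F)} :
          Set (↥(SpS E) ⊕ ↥(SpS F))) → f c = ⟨(south E, south F), Or.inl rfl⟩ := by
        rintro c (rfl | rfl) <;> rfl
      rw [hval a ha, hval b hb]
  let fq : Wedge2 (↥(SpS E)) (↥(SpS F)) (south E) (south F) → ↥(WSet E F) :=
    Quotient.lift f hresp
  have hcont : Continuous fq := by
    apply Continuous.quotient_lift
    apply Continuous.sumElim
    · exact Continuous.subtype_mk (continuous_id.prodMk continuous_const) _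
    · exact Continuous.subtype_mk (continuous_const.prodMk continuous_id) _
  have hbij : Function.Bijective fq := by
    constructor
    · intro x y
      refine Quotient.ind₂ (motive := fun x y => fq x = fq y → x = y) ?_ x y
      intro a b h
      apply Quotient.sound
      have hv := congrArg (fun w : ↥(WSet E F) => (w : LSp E F)) h
      rcases a with a | a <;> rcases b with b | b
      · have hv' : ((a, south F) : LSp E F) = ((b, south F) : LSp E F) := hv
        rw [Prod.mk.injEq] at hv'
        exact Or.inl (by rw [hv'.1])
      · have hv' : ((a, south F) : LSp E F) = ((south E, b) : LSp E F) := hv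
        rw [Prod.mk.injEq] at hv'
        refine Or.inr ⟨?_, ?_⟩
        · rw [hv'.1]; exact Set.mem_insert _ _
        · rw [← hv'.2]; simp
      · have hv' : ((south E, a) : LSp E F) = ((b, south F) : LSp E F) := hv
        rw [Prod.mk.injEq] at hv'
        refine Or.inr ⟨?_, ?_⟩
        · rw [hv'.2]; simp
        · rw [← hv'.1]; exact Set.mem_insert _ _
      · have hv' : ((south E, a) : LSp E F) = ((south E, b) : LSp E F) := hv
        rw [Prod.mk.injEq] at hv'
        exact Or.inl (by rw [hv'.2])
    · rintro ⟨⟨a, b⟩, hab⟩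
      rcases hab with h | h
      · exact ⟨Quotient.mk _ (Sum.inr b), Subtype.ext (Prod.ext h.symm rfl)⟩
      · exact ⟨Quotient.mk _ (Sum.inl a), Subtype.ext (Prod.ext rfl h.symm)⟩
  haveI : CompactSpace (Wedge2 (↥(SpS E)) (↥(SpS F)) (south E) (south F)) :=
    (inferInstance : CompactSpace (Quotient (collapseSetoid _)))
  exact Continuous.homeoOfEquivCompactToT2 (f := Equiv.ofBijective fq hbij) hcont

end Main

end SpherePunct

section ModelIso


open SpherePunct

/-- Linear isometry between the model space and Euclidean space. -/
noncomputable def modelIso (n : ℕ) :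
    WithLp 2 (EuclideanSpace ℝ (Fin n) × ℝ) ≃ₗᵢ[ℝ] EuclideanSpace ℝ (Fin (n + 1)) :=
  have hrank : Module.finrank ℝ (WithLp 2 (EuclideanSpace ℝ (Fin n) × ℝ)) = n + 1 := by
    rw [(WithLp.linearEquiv 2 ℝ (EuclideanSpace ℝ (Fin n) × ℝ)).finrank_eq,
      Module.finrank_prod, finrank_euclideanSpace_fin, Module.finrank_self]
  (stdOrthonormalBasis ℝ (WithLp 2 (EuclideanSpace ℝ (Fin n) × ℝ))).repr.trans
    (LinearIsometryEquiv.piLpCongrLeft 2 ℝ ℝ (finCongr hrank))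

end ModelIso

end

/-- **Example 3.4 of the paper, computation of `L'`.** For any open embedding `e` of `ℝ¹¹`
into `S⁴ × S⁷`, the complement of the image of the open unit ball under `e`, with the
subspace topology, is homotopy equivalent to the wedge `S⁴ ∨ S⁷`
(for any choice of basepoints). -/
theorem complement_of_chart_in_s4_prod_s7_homotopyEquiv_wedge
    (e : EuclideanSpace ℝ (Fin 11) →
      (Metric.sphere (0 : EuclideanSpace ℝ (Fin 5)) 1) ×
        (Metric.sphere (0 : EuclideanSpace ℝ (Fin 8)) 1))
    (he : Topology.IsOpenEmbedding e)
    (s₄ : Metric.sphere (0 : EuclideanSpace ℝ (Fin 5)) 1)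
    (s₇ : Metric.sphere (0 : EuclideanSpace ℝ (Fin 8)) 1) :
    Nonempty (ContinuousMap.HomotopyEquiv
      ((e '' Metric.ball 0 1)ᶜ :
        Set ((Metric.sphere (0 : EuclideanSpace ℝ (Fin 5)) 1) ×
          (Metric.sphere (0 : EuclideanSpace ℝ (Fin 8)) 1)))
      (Wedge2 (Metric.sphere (0 : EuclideanSpace ℝ (Fin 5)) 1)
        (Metric.sphere (0 : EuclideanSpace ℝ (Fin 8)) 1)
        s₄ s₇)) := by
  classical
  open SpherePunct in
  set E4 := EuclideanSpace ℝ (Fin 4) with hE4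
  set E7 := EuclideanSpace ℝ (Fin 7) with hE7
  set p : (Metric.sphere (0 : EuclideanSpace ℝ (Fin 5)) 1) ×
      (Metric.sphere (0 : EuclideanSpace ℝ (Fin 8)) 1) := e 0 with hp
  -- Step 1: the complement of the image of the ball is homotopy equivalent
  -- to the complement of a point.
  have H1 := ChartRetract.chartHomotopyEquiv e he
  -- Step 2: identify the complement of a point with the punctured model product.
  have hp1 : ‖(p.1 : EuclideanSpace ℝ (Fin 5))‖ = 1 :=
    mem_sphere_zero_iff_norm.mp p.1.2
  have hp2 : ‖(p.2 : EuclideanSpace ℝ (Fin 8))‖ = 1 :=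
    mem_sphere_zero_iff_norm.mp p.2.2
  have hnorth4 : ‖(SpherePunct.mk2 (0 : E4) 1 : WithLp 2 (E4 × ℝ))‖ = 1 :=
    SpherePunct.norm_eq_one_of_sq' (by rw [SpherePunct.norm_mk2_sq]; simp)
  have hnorth7 : ‖(SpherePunct.mk2 (0 : E7) 1 : WithLp 2 (E7 × ℝ))‖ = 1 :=
    SpherePunct.norm_eq_one_of_sq' (by rw [SpherePunct.norm_mk2_sq]; simp)
  have hsouth4 : ‖(SpherePunct.mk2 (0 : E4) (-1) : WithLp 2 (E4 × ℝ))‖ = 1 :=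
    SpherePunct.norm_eq_one_of_sq' (by rw [SpherePunct.norm_mk2_sq]; simp)
  have hsouth7 : ‖(SpherePunct.mk2 (0 : E7) (-1) : WithLp 2 (E7 × ℝ))‖ = 1 :=
    SpherePunct.norm_eq_one_of_sq' (by rw [SpherePunct.norm_mk2_sq]; simp)
  obtain ⟨ψ4, hψ4⟩ := exists_li_map_unit
    (a := (modelIso 4).symm (p.1 : EuclideanSpace ℝ (Fin 5)))
    (b := SpherePunct.mk2 (0 : E4) 1)
    (by rw [LinearIsometryEquiv.norm_map]; exact hp1) hnorth4
  obtain ⟨ψ7, hψ7⟩ := exists_li_map_unit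
    (a := (modelIso 7).symm (p.2 : EuclideanSpace ℝ (Fin 8)))
    (b := SpherePunct.mk2 (0 : E7) 1)
    (by rw [LinearIsometryEquiv.norm_map]; exact hp2) hnorth7
  let δ4 : ↥(Metric.sphere (0 : EuclideanSpace ℝ (Fin 5)) 1) ≃ₜ ↥(SpherePunct.SpS E4) :=
    (sphereHomeoOfLI (modelIso 4).symm).trans (sphereHomeoOfLI ψ4)
  let δ7 : ↥(Metric.sphere (0 : EuclideanSpace ℝ (Fin 8)) 1) ≃ₜ ↥(SpherePunct.SpS E7) :=
    (sphereHomeoOfLI (modelIso 7).symm).trans (sphereHomeoOfLI ψ7)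
  have hδ4 : δ4 p.1 = SpherePunct.north E4 := Subtype.ext hψ4
  have hδ7 : δ7 p.2 = SpherePunct.north E7 := Subtype.ext hψ7
  let Ψ := δ4.prodCongr δ7
  have hΨp : Ψ p = (SpherePunct.north E4, SpherePunct.north E7) := by
    have : Ψ p = (δ4 p.1, δ7 p.2) := rfl
    rw [this, hδ4, hδ7]
  let H2 : ↥(({p}ᶜ : Set _)) ≃ₜ ↥(SpherePunct.PSet E4 E7) :=
    (Ψ.complSingleton p).trans (Homeomorph.setCongr (by rw [hΨp]; rfl))
  -- Step 3: the punctured model product deformation retracts onto the wedge.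
  have hu4 : ‖(EuclideanSpace.single (0 : Fin 4) (1 : ℝ) : E4)‖ = 1 := by
    rw [EuclideanSpace.norm_single]; norm_num
  have hu7 : ‖(EuclideanSpace.single (0 : Fin 7) (1 : ℝ) : E7)‖ = 1 := by
    rw [EuclideanSpace.norm_single]; norm_num
  have H3 := SpherePunct.puncturedHomotopyEquiv hu4 hu7
  -- Step 4: the wedge subspace is the wedge quotient.
  have H4 := SpherePunct.wedgeToWSet (E := E4) (F := E7)
  -- Step 5: identify the model wedge with the target wedge.
  obtain ⟨χ4, hχ4⟩ := exists_li_map_unit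
    (a := SpherePunct.mk2 (0 : E4) (-1))
    (b := (modelIso 4).symm (s₄ : EuclideanSpace ℝ (Fin 5)))
    hsouth4
    (by rw [LinearIsometryEquiv.norm_map]; exact mem_sphere_zero_iff_norm.mp s₄.2)
  obtain ⟨χ7, hχ7⟩ := exists_li_map_unit
    (a := SpherePunct.mk2 (0 : E7) (-1))
    (b := (modelIso 7).symm (s₇ : EuclideanSpace ℝ (Fin 8)))
    hsouth7
    (by rw [LinearIsometryEquiv.norm_map]; exact mem_sphere_zero_iff_norm.mp s₇.2)
  let f4 : ↥(SpherePunct.SpS E4) ≃ₜ ↥(Metric.sphere (0 : EuclideanSpace ℝ (Fin 5)) 1) :=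
    (sphereHomeoOfLI χ4).trans (sphereHomeoOfLI (modelIso 4))
  let f7 : ↥(SpherePunct.SpS E7) ≃ₜ ↥(Metric.sphere (0 : EuclideanSpace ℝ (Fin 8)) 1) :=
    (sphereHomeoOfLI χ7).trans (sphereHomeoOfLI (modelIso 7))
  have hf4 : f4 (SpherePunct.south E4) = s₄ := by
    apply Subtype.ext
    show (modelIso 4) (χ4 (SpherePunct.mk2 (0 : E4) (-1))) = _
    rw [hχ4, LinearIsometryEquiv.apply_symm_apply]
  have hf7 : f7 (SpherePunct.south E7) = s₇ := by
    apply Subtype.ext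
    show (modelIso 7) (χ7 (SpherePunct.mk2 (0 : E7) (-1))) = _
    rw [hχ7, LinearIsometryEquiv.apply_symm_apply]
  have H5 := wedgeCongr f4 f7 hf4 hf7
  exact ⟨((H1.trans H2.toHomotopyEquiv).trans H3).trans (H4.symm.trans H5).toHomotopyEquiv⟩
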